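/- Let C ⊆ (F_{q^r})^n be a complete Galois supplemented cyclic code and let u = (x_1, …, x_n) ∈ C be a word of odd type, i.e., x_1 + ⋯ + x_n ≠ 0. Then wt(u) ≥ n^{1/r}, i.e., wt(u)^r ≥ n, where wt(u) is the Hamming weight of u. -/

import Mathlib

open Polynomial

/-- Coefficientwise application of `x ↦ x^(q^i)` (the `i`-th power of the Frobenius
`σ : x ↦ x^q`) to a polynomial. -/
noncomputable def polyGal {F : Type*} [Field F] (q i : ℕ) (g : Polynomial F) : Polynomial F :=
  ∑ j ∈ g.support, Polynomial.C ((g.coeff j) ^ (q ^ i)) * Polynomial.X ^ j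

/-- The polynomial of degree `< n` whose coefficient vector is the word `u`. -/
noncomputable def wordPoly {F : Type*} [Field F] {n : ℕ} (u : Fin n → F) : Polynomial F :=
  ∑ j : Fin n, Polynomial.C (u j) * Polynomial.X ^ (j : ℕ)

/-- The Hamming weight of a word: the number of nonzero coordinates. -/
noncomputable def hammingWt {F : Type*} [Field F] {n : ℕ} (u : Fin n → F) : ℕ :=
  Set.ncard {j : Fin n | u j ≠ 0}

section Aux

variable {F : Type*} [Field F]

lemma polyGal_coeff (q i : ℕ) (hq : 0 < q) (g : Polynomial F) (m : ℕ) :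
    (polyGal q i g).coeff m = (g.coeff m) ^ (q ^ i) := by
  unfold polyGal
  rw [finset_sum_coeff]
  have hterm : ∀ b, (Polynomial.C ((g.coeff b) ^ (q ^ i)) * X ^ b).coeff m
      = if m = b then (g.coeff b) ^ (q ^ i) else 0 := by
    intro b
    rw [coeff_C_mul, coeff_X_pow]
    split_ifs <;> simp
  rw [Finset.sum_congr rfl fun b _ => hterm b,
    Finset.sum_ite_eq g.support m fun b => (g.coeff b) ^ (q ^ i)]
  by_cases hm : m ∈ g.support
  · rw [if_pos hm]
  · rw [if_neg hm, notMem_support_iff.mp hm, zero_pow (pow_pos hq i).ne']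

lemma polyGal_eq_map (q i : ℕ) (hq : 0 < q) (φ : F →+* F) (hφ : ∀ x, φ x = x ^ q ^ i)
    (g : Polynomial F) : polyGal q i g = g.map φ := by
  ext m
  rw [polyGal_coeff q i hq, coeff_map, hφ]

/-- Fold a polynomial's coefficients modulo `n` and read off coefficient `j`. -/
noncomputable def fold (n j : ℕ) (P : Polynomial F) : F :=
  P.sum fun k c => if k % n = j then c else 0

lemma fold_zero (n j : ℕ) : fold n j (0 : Polynomial F) = 0 :=
  Polynomial.sum_zero_index _

lemma fold_add (n j : ℕ) (P Q : Polynomial F) :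
    fold n j (P + Q) = fold n j P + fold n j Q := by
  unfold fold
  apply Polynomial.sum_add_index
  · intro i; simp
  · intro a b₁ b₂; split_ifs <;> simp

lemma fold_neg (n j : ℕ) (P : Polynomial F) : fold n j (-P) = -fold n j P := by
  unfold fold
  rw [Polynomial.sum_def, Polynomial.sum_def, support_neg, ← Finset.sum_neg_distrib]
  apply Finset.sum_congr rfl
  intro k _
  rw [coeff_neg]
  split_ifs <;> simp

lemma fold_sub (n j : ℕ) (P Q : Polynomial F) :
    fold n j (P - Q) = fold n j P - fold n j Q := by
  rw [sub_eq_add_neg, fold_add, fold_neg, sub_eq_add_neg]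

lemma fold_monomial (n j k : ℕ) (c : F) :
    fold n j (monomial k c) = if k % n = j then c else 0 := by
  unfold fold
  rw [Polynomial.sum_monomial_index]
  simp

lemma fold_sum (n j : ℕ) {ι : Type*} (s : Finset ι) (f : ι → Polynomial F) :
    fold n j (∑ i ∈ s, f i) = ∑ i ∈ s, fold n j (f i) := by
  induction s using Finset.cons_induction with
  | empty => simp [fold_zero]
  | cons a s ha ih => rw [Finset.sum_cons, Finset.sum_cons, fold_add, ih]

lemma fold_geom_mul (n j : ℕ) (S : Polynomial F) :
    fold n j ((X ^ n - 1) * S) = 0 := by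
  induction S using Polynomial.induction_on' with
  | add p q hp hq => rw [mul_add, fold_add, hp, hq, add_zero]
  | monomial k c =>
    have e : (X ^ n - 1 : Polynomial F) * monomial k c
        = monomial (n + k) c - monomial k c := by
      rw [sub_mul, one_mul, X_pow_eq_monomial, monomial_mul_monomial, one_mul]
    rw [e, fold_sub, fold_monomial, fold_monomial, Nat.add_mod_left, sub_self]

lemma fold_geom (n j : ℕ) (hj : j < n) (c : F) :
    fold n j (C c * ∑ k ∈ Finset.range n, X ^ k) = c := by
  rw [Finset.mul_sum]
  have e : ∀ k, C c * (X : Polynomial F) ^ k = monomial k c := fun k =>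
    C_mul_X_pow_eq_monomial
  simp_rw [e]
  rw [fold_sum]
  have : ∀ k ∈ Finset.range n, fold n j (monomial k c : Polynomial F)
      = if k = j then c else 0 := by
    intro k hk
    rw [fold_monomial, Nat.mod_eq_of_lt (Finset.mem_range.mp hk)]
  rw [Finset.sum_congr rfl this, Finset.sum_ite_eq' (Finset.range n) j fun _ => c,
    if_pos (Finset.mem_range.mpr hj)]

lemma card_support_ge (n : ℕ) (P : Polynomial F)
    (hfold : ∀ j : Fin n, fold n (j : ℕ) P ≠ 0) : n ≤ P.support.card := by
  have hex : ∀ j : Fin n, ∃ k ∈ P.support, k % n = (j : ℕ) := by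
    intro j
    by_contra hcon
    push_neg at hcon
    apply hfold j
    unfold fold
    rw [Polynomial.sum_def]
    apply Finset.sum_eq_zero
    intro k hk
    rw [if_neg (hcon k hk)]
  choose f hf1 hf2 using hex
  have hcard : n = (Finset.univ : Finset (Fin n)).card := by simp
  rw [hcard]
  apply Finset.card_le_card_of_injOn f (fun j _ => hf1 j)
  intro a _ b _ hab
  exact Fin.ext (by rw [← hf2 a, hab, hf2 b])

lemma card_support_prod_le (s : Finset ℕ) (f : ℕ → Polynomial F) :
    (∏ i ∈ s, f i).support.card ≤ ∏ i ∈ s, (f i).support.card := by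
  induction s using Finset.cons_induction with
  | empty =>
    simp only [Finset.prod_empty]
    rw [← Polynomial.C_1, Polynomial.support_C (one_ne_zero)]
    simp
  | cons a s ha ih =>
    rw [Finset.prod_cons, Finset.prod_cons]
    exact Polynomial.card_support_mul_le.trans (Nat.mul_le_mul le_rfl ih)

end Aux

/-- if `C ⊆ (F_{q^r})^n` is a complete Galois supplemented cyclic code (i.e.
its generator `g` is Galois coprime and `∏_τ g^τ = 1 + x + ⋯ + x^(n−1)`) and `u ∈ C` has odd
type (the sum of its coordinates is nonzero), then `wt(u) ≥ n^(1/r)`, i.e. `wt(u)^r ≥ n`. -/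
theorem stmt14 (q r n : ℕ) (hq : IsPrimePow q) (hr : 1 < r) (hn : 0 < n)
    (hcop : Nat.Coprime n q)
    (F : Type*) [Field F] [Fintype F] (hF : Fintype.card F = q ^ r)
    (g : Polynomial F) (hmonic : g.Monic) (hdvd : g ∣ (Polynomial.X ^ n - 1))
    (hGC : ∀ i : ℕ, 0 < i → i < r → IsCoprime g (polyGal q i g))
    (hcomplete : ∏ i ∈ Finset.range r, polyGal q i g =
      ∑ j ∈ Finset.range n, Polynomial.X ^ j)
    (u : Fin n → F) (hu : g ∣ wordPoly u) (hodd : (∑ j, u j) ≠ 0) :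
    n ≤ (hammingWt u) ^ r := by
  classical
  obtain ⟨p, k, hpp, hk, hpk⟩ := hq
  have hpp' : p.Prime := hpp.nat_prime
  have hq0 : 0 < q := hpk ▸ pow_pos hpp'.pos k
  -- the characteristic of F is p
  obtain ⟨p', hp'⟩ := CharP.exists F
  haveI := hp'
  obtain ⟨m, hmp, hcardm⟩ := FiniteField.card F p'
  have hpdvd : p ∣ Fintype.card F := by
    rw [hF, ← hpk, ← pow_mul]
    exact dvd_pow_self p (Nat.mul_pos hk (lt_trans one_pos hr)).ne'
  have hpe : p = p' := by
    rw [hcardm] at hpdvd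
    exact (Nat.prime_dvd_prime_iff_eq hpp' hmp).mp (hpp'.dvd_of_dvd_pow hpdvd)
  subst hpe
  haveI : Fact p.Prime := ⟨hpp'⟩
  haveI : ExpChar F p := inferInstance
  -- Frobenius powers
  set φ : ℕ → (F →+* F) := fun i => iterateFrobenius F p (k * i) with hφdef
  have hφ : ∀ i x, φ i x = x ^ q ^ i := by
    intro i x
    show iterateFrobenius F p (k * i) x = x ^ q ^ i
    rw [iterateFrobenius_def, ← hpk, ← pow_mul]
  set f : Polynomial F := wordPoly u with hf
  set P : Polynomial F := ∏ i ∈ Finset.range r, polyGal q i f with hP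
  set h : Polynomial F := ∑ j ∈ Finset.range n, Polynomial.X ^ j with hh
  -- h divides P
  have hdvd_i : ∀ i, polyGal q i g ∣ polyGal q i f := by
    intro i
    rw [polyGal_eq_map q i hq0 (φ i) (hφ i), polyGal_eq_map q i hq0 (φ i) (hφ i)]
    exact Polynomial.map_dvd (φ i) hu
  have hhP : h ∣ P := by
    rw [← hcomplete]
    exact Finset.prod_dvd_prod_of_dvd _ _ (fun i _ => hdvd_i i)
  -- eval at 1
  have hfeval : f.eval 1 = ∑ j, u j := by
    simp [hf, wordPoly, Polynomial.eval_finset_sum]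
  have hPeval : P.eval 1 ≠ 0 := by
    rw [hP, Polynomial.eval_prod]
    apply Finset.prod_ne_zero_iff.mpr
    intro i _
    rw [polyGal_eq_map q i hq0 (φ i) (hφ i), Polynomial.eval_map, Polynomial.eval₂_at_one,
      hfeval]
    exact fun h0 => hodd ((_root_.map_eq_zero (φ i)).mp h0)
  -- decomposition P = (X^n - 1) * S + C c * h
  obtain ⟨Q, hQ⟩ := hhP
  have hc : Q.eval 1 ≠ 0 := fun h0 => hPeval (by rw [hQ, Polynomial.eval_mul, h0, mul_zero])
  have hroot : (X - Polynomial.C 1 : Polynomial F) ∣ (Q - Polynomial.C (Q.eval 1)) := by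
    apply Polynomial.dvd_iff_isRoot.mpr
    simp [Polynomial.IsRoot]
  obtain ⟨S, hS⟩ := hroot
  have hdecomp : P = (X ^ n - 1) * S + Polynomial.C (Q.eval 1) * h := by
    have h1 : Q = (X - Polynomial.C 1) * S + Polynomial.C (Q.eval 1) := by
      rw [← hS]; ring
    calc P = h * ((X - Polynomial.C 1) * S + Polynomial.C (Q.eval 1)) := by rw [hQ, ← h1]
      _ = (h * (X - Polynomial.C 1)) * S + Polynomial.C (Q.eval 1) * h := by ring
      _ = (X ^ n - 1) * S + Polynomial.C (Q.eval 1) * h := by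
          rw [hh, Polynomial.C_1, geom_sum_mul]
  -- fold is nonzero everywhere
  have hfold : ∀ j : Fin n, fold n (j : ℕ) P ≠ 0 := by
    intro j
    rw [hdecomp, fold_add, fold_geom_mul, zero_add, fold_geom n (j : ℕ) j.2]
    exact hc
  have hnP : n ≤ P.support.card := card_support_ge n P hfold
  -- support cardinalities
  have hsupp_i : ∀ i, (polyGal q i f).support = f.support := by
    intro i
    ext m
    simp only [Polynomial.mem_support_iff, polyGal_coeff q i hq0]
    rw [pow_ne_zero_iff (by positivity)]
  -- Hamming weight is the support size of f
  have hcoeff : ∀ m, f.coeff m = if hm : m < n then u ⟨m, hm⟩ else 0 := by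
    intro m
    rw [hf, wordPoly, finset_sum_coeff]
    by_cases hm : m < n
    · rw [dif_pos hm, Finset.sum_eq_single (⟨m, hm⟩ : Fin n)]
      · simp
      · intro b _ hb
        have hmb : m ≠ (b : ℕ) := fun e => hb (Fin.ext e.symm)
        simp [coeff_C_mul, coeff_X_pow, hmb]
      · simp
    · rw [dif_neg hm]
      apply Finset.sum_eq_zero
      intro b _
      have hmb : m ≠ (b : ℕ) := fun e => hm (e ▸ b.2)
      simp [coeff_C_mul, coeff_X_pow, hmb]
  have hsupp_f : f.support = (Finset.univ.filter fun j : Fin n => u j ≠ 0).image Fin.val := by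
    ext m
    simp only [Polynomial.mem_support_iff, Finset.mem_image, Finset.mem_filter,
      Finset.mem_univ, true_and]
    constructor
    · intro hm
      rw [hcoeff] at hm
      by_cases hlt : m < n
      · rw [dif_pos hlt] at hm
        exact ⟨⟨m, hlt⟩, hm, rfl⟩
      · rw [dif_neg hlt] at hm; exact absurd rfl hm
    · rintro ⟨j, hj, rfl⟩
      rw [hcoeff, dif_pos j.2]
      simpa using hj
  have hwt : hammingWt u = f.support.card := by
    rw [hsupp_f, Finset.card_image_of_injective _ Fin.val_injective, hammingWt]
    rw [show {j : Fin n | u j ≠ 0} = ↑(Finset.univ.filter fun j : Fin n => u j ≠ 0) by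
      ext; simp]
    rw [Set.ncard_coe_finset]
  calc n ≤ P.support.card := hnP
    _ ≤ ∏ i ∈ Finset.range r, (polyGal q i f).support.card :=
        card_support_prod_le _ _
    _ = ∏ i ∈ Finset.range r, f.support.card := by
        apply Finset.prod_congr rfl
        intro i _
        rw [hsupp_i i]
    _ = f.support.card ^ r := by rw [Finset.prod_const, Finset.card_range]
    _ = (hammingWt u) ^ r := by rw [hwt]
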